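/- Let Σ ⊂ ℝ^{n-1} be a bounded domain with least Dirichlet eigenvalue α₀ > 0, let β ∈ (0, √α₀), ξ ∈ ℝ, and let λ ∈ ℂ satisfy Re λ > −(Im λ)²/(4β²) − α₀ + β² and Im λ + 2ξβ = 0. Then there exists a constant l = l(λ, ξ, β) > 0 such that for all u ∈ W^{1,2}_0(Σ), |∫_Σ ((λ + (ξ+iβ)²)|u|² + |∇'u|²) dx'| ≥ l ‖∇'u‖²_{L²(Σ)}. -/

import Mathlib

open MeasureTheory Complex

noncomputable section

/-- coercivity of the parametrized bilinear form. For `β ∈ (0,√α₀)`,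
`ξ ∈ ℝ`, `λ ∈ ℂ` with `Re λ > −(Im λ)²/(4β²) − α₀ + β²` and `Im λ + 2ξβ = 0`, there is
`l = l(λ,ξ,β) > 0` with `|∫_Σ ((λ+(ξ+iβ)²)|u|² + |∇'u|²)| ≥ l‖∇'u‖₂²` for all
`u ∈ W^{1,2}₀(Σ)`. -/
theorem coercivity_parametrized_form (m : ℕ) (S : Set (Fin m → ℝ))
    (hSopen : IsOpen S) (hSconn : IsConnected S) (hSbdd : Bornology.IsBounded S)
    (α₀ : ℝ) (hα₀ : 0 < α₀)
    (hPoincare : ∀ v : (Fin m → ℝ) → ℂ, ContDiff ℝ 1 v → HasCompactSupport v →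
      tsupport v ⊆ S →
      α₀ * ∫ x in S, ‖v x‖ ^ 2 ≤ ∫ x in S, ‖fderiv ℝ v x‖ ^ 2)
    (β ξ : ℝ) (hβ : 0 < β) (hβ' : β < Real.sqrt α₀) (lam : ℂ)
    (hre : lam.re > -(lam.im) ^ 2 / (4 * β ^ 2) - α₀ + β ^ 2)
    (him : lam.im + 2 * ξ * β = 0) :
    ∃ l : ℝ, 0 < l ∧
      ∀ u : (Fin m → ℝ) → ℂ, ContDiff ℝ 1 u → HasCompactSupport u → tsupport u ⊆ S →
        l * ∫ x in S, ‖fderiv ℝ u x‖ ^ 2 ≤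
          ‖(lam + ((ξ : ℂ) + (β : ℂ) * Complex.I) ^ 2) *
              ((∫ x in S, ‖u x‖ ^ 2 : ℝ) : ℂ) +
            ((∫ x in S, ‖fderiv ℝ u x‖ ^ 2 : ℝ) : ℂ)‖ := by
  set c : ℝ := lam.re + ξ ^ 2 - β ^ 2 with hc_def
  have hβ0 : (β : ℝ) ≠ 0 := ne_of_gt hβ
  have him' : lam.im = -(2 * ξ * β) := by linarith
  have hsq : lam.im ^ 2 = 4 * ξ ^ 2 * β ^ 2 := by rw [him']; ring
  have hdiv : -(lam.im) ^ 2 / (4 * β ^ 2) = -ξ ^ 2 := by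
    rw [hsq]; field_simp
  have hc_gt : -α₀ < c := by
    rw [hdiv] at hre
    simp only [hc_def]; linarith
  have hI : ((ξ : ℂ) + (β : ℂ) * Complex.I) ^ 2
      = ((ξ ^ 2 - β ^ 2 : ℝ) : ℂ) + ((2 * ξ * β : ℝ) : ℂ) * Complex.I := by
    push_cast
    linear_combination (β : ℂ) ^ 2 * Complex.I_sq
  have hcC : lam + ((ξ : ℂ) + (β : ℂ) * Complex.I) ^ 2 = (c : ℂ) := by
    rw [hI]
    apply Complex.ext
    · simp only [Complex.add_re, Complex.ofReal_re, Complex.mul_re, Complex.mul_im,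
        Complex.ofReal_im, Complex.I_re, Complex.I_im, hc_def]
      ring
    · simp only [Complex.add_im, Complex.ofReal_im, Complex.mul_im, Complex.mul_re,
        Complex.ofReal_re, Complex.I_re, Complex.I_im, Complex.ofReal_im]
      linarith
  refine ⟨min 1 (1 + c / α₀), ?_, ?_⟩
  · apply lt_min one_pos
    have : 0 < α₀ + c := by linarith
    have := div_pos this hα₀
    have heq : (α₀ + c) / α₀ = 1 + c / α₀ := by field_simp
    linarith [heq ▸ this]
  · intro u hu1 hu2 hu3
    set M : ℝ := ∫ x in S, ‖u x‖ ^ 2 with hM_def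
    set D : ℝ := ∫ x in S, ‖fderiv ℝ u x‖ ^ 2 with hD_def
    have hM0 : 0 ≤ M := setIntegral_nonneg hSopen.measurableSet (fun x _ => by positivity)
    have hD0 : 0 ≤ D := setIntegral_nonneg hSopen.measurableSet (fun x _ => by positivity)
    have hP : α₀ * M ≤ D := hPoincare u hu1 hu2 hu3
    set l : ℝ := min 1 (1 + c / α₀) with hl_def
    have key : l * D ≤ c * M + D := by
      rcases le_or_gt 0 c with h | h
      · have h1 : l ≤ 1 := min_le_left _ _
        nlinarith [mul_nonneg h hM0]
      · have hMD : M ≤ D / α₀ := (le_div_iff₀' hα₀).mpr hP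
        have h3 : c * (D / α₀) ≤ c * M := mul_le_mul_of_nonpos_left hMD h.le
        have h2 : l * D ≤ (1 + c / α₀) * D :=
          mul_le_mul_of_nonneg_right (min_le_right _ _) hD0
        calc l * D ≤ (1 + c / α₀) * D := h2
          _ = D + c * (D / α₀) := by ring
          _ ≤ D + c * M := by linarith
          _ = c * M + D := by ring
    rw [hcC]
    have hre2 : (c : ℂ) * (M : ℂ) + (D : ℂ) = ((c * M + D : ℝ) : ℂ) := by push_cast; ring
    rw [hre2, Complex.norm_real, Real.norm_eq_abs]
    calc l * D ≤ c * M + D := key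
      _ ≤ |c * M + D| := le_abs_self _

end
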